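/- Let d ≥ 1, f ∈ C^∞(ℝ^d, ℝ^d), x₀ ∈ ℝ^d, q > 1, and let λ₀ be the smallest λ > 0 satisfying h_q(λ) = 1. Suppose T > 0 satisfies e λ₀ T |∇^m f(x₀)| < 1 for all m ≥ 0, and that for every m ≥ 0, sup_{|x − x₀| < T (1 − e^{−λ₀ T})^{−1/(2q)}} |∇^m f(x)| < (1 − e^{−λ₀ T})^{−1/(2q)}. Then the initial value problem x'(t) = f(x(t)) on [0,T] with x(0) = x₀ has a classical solution x ∈ C¹([0,T], ℝ^d). -/

import Mathlib

/-- `h_q(λ) := λ e^{−λ/e} (√(4 + e^{−2λ/e}) − e^{−λ/e})^{1/q} / (2^{1/q}(1 − e^{−λ/e})^{1/(2q)})`. -/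
noncomputable def hFun (q lam : ℝ) : ℝ :=
  lam * Real.exp (-(lam / Real.exp 1)) *
    ((Real.sqrt (4 + Real.exp (-(2 * lam / Real.exp 1))) - Real.exp (-(lam / Real.exp 1))) ^ (1 / q)
      / ((2:ℝ) ^ (1 / q) * (1 - Real.exp (-(lam / Real.exp 1))) ^ (1 / (2 * q))))

/-- Existence intervals: with `λ₀` the smallest positive root of
`h_q(λ) = 1`, if `e λ₀ T |∇^m f(x₀)| < 1` for all `m` and
`sup_{|x−x₀| < T(1−e^{−λ₀T})^{−1/(2q)}} |∇^m f(x)| < (1−e^{−λ₀T})^{−1/(2q)}` for all `m`,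
then `x' = f(x)`, `x(0) = x₀` has a classical solution on `[0,T]`. -/
theorem stmt_12 (d : ℕ) (hd : 1 ≤ d)
    (f : EuclideanSpace ℝ (Fin d) → EuclideanSpace ℝ (Fin d)) (hf : ContDiff ℝ (⊤ : ℕ∞) f)
    (x₀ : EuclideanSpace ℝ (Fin d)) (q : ℝ) (hq : 1 < q) (lam0 : ℝ)
    (hlam0 : IsLeast {lam : ℝ | 0 < lam ∧ hFun q lam = 1} lam0)
    (T : ℝ) (hT : 0 < T)
    (hder : ∀ m : ℕ, Real.exp 1 * lam0 * T * ‖iteratedFDeriv ℝ m f x₀‖ < 1)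
    (hsup : ∀ m : ℕ, ∃ K : ℝ, K < (1 - Real.exp (-(lam0 * T))) ^ (-(1 / (2 * q))) ∧
      ∀ z : EuclideanSpace ℝ (Fin d),
        ‖z - x₀‖ < T * (1 - Real.exp (-(lam0 * T))) ^ (-(1 / (2 * q))) →
        ‖iteratedFDeriv ℝ m f z‖ ≤ K) :
    ∃ x : ℝ → EuclideanSpace ℝ (Fin d),
      ContDiffOn ℝ 1 x (Set.Icc 0 T) ∧ x 0 = x₀ ∧
      ∀ t ∈ Set.Icc (0:ℝ) T, HasDerivWithinAt x (f (x t)) (Set.Icc 0 T) t := by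
  set M : ℝ := (1 - Real.exp (-(lam0 * T))) ^ (-(1 / (2 * q))) with hM_def
  have hlam0pos : 0 < lam0 := hlam0.1.1
  have hbase : 0 < 1 - Real.exp (-(lam0 * T)) := by
    have : Real.exp (-(lam0 * T)) < 1 := by
      rw [Real.exp_lt_one_iff]
      nlinarith
    linarith
  have hMpos : 0 < M := Real.rpow_pos_of_pos hbase _
  obtain ⟨K, hKM, hK⟩ := hsup 0
  obtain ⟨K1, hK1M, hK1⟩ := hsup 1
  have hx₀mem : ∀ z : EuclideanSpace ℝ (Fin d), z ∈ Metric.closedBall x₀ (T * K) →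
      ‖z - x₀‖ < T * M := by
    intro z hz
    rw [Metric.mem_closedBall, dist_eq_norm] at hz
    have : T * K < T * M := by
      apply mul_lt_mul_of_pos_left hKM hT
    linarith
  have hK0 : 0 ≤ K := by
    have := hK x₀ (by simpa using mul_pos hT hMpos)
    exact le_trans (norm_nonneg _) this
  have hK10 : 0 ≤ K1 := by
    have := hK1 x₀ (by simpa using mul_pos hT hMpos)
    exact le_trans (norm_nonneg _) this
  -- Picard–Lindelöf data
  have hTK : ((T * K).toNNReal : ℝ) = T * K := Real.coe_toNNReal _ (mul_nonneg hT.le hK0)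
  have hpl : IsPicardLindelof (fun _ z => f z) (⟨0, le_refl 0, hT.le⟩ : Set.Icc (0:ℝ) T) x₀
      (T * K).toNNReal 0 K.toNNReal K1.toNNReal := by
    constructor
    · intro t _
      rw [hTK]
      apply (convex_closedBall x₀ (T * K)).lipschitzOnWith_of_nnnorm_fderiv_le
        (fun z _ => (hf.differentiable (by simp)).differentiableAt)
      intro z hz
      rw [Real.le_toNNReal_iff_coe_le hK10, coe_nnnorm]
      have hnorm : ‖fderiv ℝ f z‖ = ‖iteratedFDeriv ℝ 1 f z‖ := by
        rw [← norm_iteratedFDeriv_fderiv, norm_iteratedFDeriv_zero]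
      rw [hnorm]
      exact hK1 z (hx₀mem z hz)
    · intro z _
      exact continuousOn_const
    · intro t _ z hz
      rw [hTK] at hz
      have := hK z (hx₀mem z hz)
      rw [norm_iteratedFDeriv_zero] at this
      exact this.trans (Real.le_coe_toNNReal K)
    · have : max (T - 0) (0 - 0) = T := by
        rw [sub_zero, sub_zero, max_eq_left hT.le]
      simp only [NNReal.coe_zero, sub_zero, hTK, Real.coe_toNNReal _ hK0]
      rw [max_eq_left hT.le, mul_comm]
  obtain ⟨x, hx0, hx⟩ := hpl.exists_eq_forall_mem_Icc_hasDerivWithinAt₀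
  refine ⟨x, ?_, hx0, hx⟩
  -- C¹ regularity
  have hud : UniqueDiffOn ℝ (Set.Icc (0:ℝ) T) := uniqueDiffOn_Icc hT
  have hdiff : DifferentiableOn ℝ x (Set.Icc 0 T) :=
    fun t ht => (hx t ht).differentiableWithinAt
  rw [show (1 : WithTop ℕ∞) = 0 + 1 by norm_num, contDiffOn_succ_iff_derivWithin hud]
  refine ⟨hdiff, by simp, ?_⟩
  rw [contDiffOn_zero]
  have hderiv : ∀ t ∈ Set.Icc (0:ℝ) T, derivWithin x (Set.Icc 0 T) t = f (x t) :=
    fun t ht => (hx t ht).derivWithin (hud t ht)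
  exact ContinuousOn.congr
    ((hf.continuous.comp_continuousOn hdiff.continuousOn)) hderiv
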